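/- The recursion β_{s+1} = (1 - q^s)·β_s holds, where β_s = Σ_{i=0}^{s} q^{is} binom_q(N-1-s+i, N-1-s); hence β_s = 0 for all 1 ≤ s ≤ N-1 since β_1 = [N]_q = 0. -/

import Mathlib

noncomputable section

/-- The q-integer `[k]_q = 1 + q + ... + q^(k-1)`. -/
def qInt (q : ℂ) (k : ℕ) : ℂ := ∑ i ∈ Finset.range k, q ^ i

/-- The q-factorial `[k]_q! = [1]_q [2]_q ⋯ [k]_q`. -/
def qFac (q : ℂ) (k : ℕ) : ℂ := ∏ i ∈ Finset.range k, qInt q (i + 1)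

/-- The Gaussian binomial coefficient `binom_q(n, k) = [n]_q! / ([k]_q! [n-k]_q!)`. -/
def qBinom (q : ℂ) (n k : ℕ) : ℂ := qFac q n / (qFac q k * qFac q (n - k))

/-- `β_s = ∑_{i=0}^{s} q^{is} binom_q(N-1-s+i, N-1-s)`. -/
def betaSum (q : ℂ) (N s : ℕ) : ℂ :=
  ∑ i ∈ Finset.range (s + 1), q ^ (i * s) * qBinom q (N - 1 - s + i) (N - 1 - s)

lemma qInt_add (q : ℂ) (a b : ℕ) : qInt q (a + b) = qInt q a + q ^ a * qInt q b := by
  simp [qInt, Finset.sum_range_add, pow_add, Finset.mul_sum]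

lemma qFac_succ (q : ℂ) (n : ℕ) : qFac q (n + 1) = qFac q n * qInt q (n + 1) :=
  Finset.prod_range_succ _ _

lemma qFac_zero (q : ℂ) : qFac q 0 = 1 := rfl

lemma qInt_one (q : ℂ) : qInt q 1 = 1 := by simp [qInt]

lemma qInt_ne_zero {N : ℕ} {q : ℂ} (hN : 2 ≤ N) (hq : IsPrimitiveRoot q N)
    {k : ℕ} (h1 : 1 ≤ k) (h2 : k < N) : qInt q k ≠ 0 := by
  have hq1 : q ≠ 1 := hq.ne_one hN
  rw [qInt, geom_sum_eq hq1]
  exact div_ne_zero (sub_ne_zero.2 (hq.pow_ne_one_of_pos_of_lt (by omega) h2))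
    (sub_ne_zero.2 hq1)

lemma qFac_ne_zero {N : ℕ} {q : ℂ} (hN : 2 ≤ N) (hq : IsPrimitiveRoot q N)
    {k : ℕ} (h2 : k < N) : qFac q k ≠ 0 := by
  rw [qFac]
  exact Finset.prod_ne_zero_iff.2 fun i hi =>
    qInt_ne_zero hN hq (Nat.succ_le_succ (Nat.zero_le _))
      (by have := Finset.mem_range.1 hi; omega)

lemma qInt_N_zero {N : ℕ} {q : ℂ} (hN : 2 ≤ N) (hq : IsPrimitiveRoot q N) :
    qInt q N = 0 := hq.geom_sum_eq_zero hN

lemma qFac_N_zero {N : ℕ} {q : ℂ} (hN : 2 ≤ N) (hq : IsPrimitiveRoot q N) :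
    qFac q N = 0 := by
  obtain ⟨m, rfl⟩ : ∃ m, N = m + 1 := ⟨N - 1, by omega⟩
  rw [qFac_succ, qInt_N_zero hN hq, mul_zero]

lemma qBinom_N_zero {N : ℕ} {q : ℂ} (hN : 2 ≤ N) (hq : IsPrimitiveRoot q N) (j : ℕ) :
    qBinom q N j = 0 := by
  rw [qBinom, qFac_N_zero hN hq, zero_div]

lemma qBinom_self {N : ℕ} {q : ℂ} (hN : 2 ≤ N) (hq : IsPrimitiveRoot q N)
    {n : ℕ} (h : n < N) : qBinom q n n = 1 := by
  rw [qBinom, Nat.sub_self, qFac_zero, mul_one, div_self (qFac_ne_zero hN hq h)]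

/-- Pascal-type identity. -/
lemma qBinom_pascal {N : ℕ} {q : ℂ} (hN : 2 ≤ N) (hq : IsPrimitiveRoot q N)
    (k i : ℕ) (hi : 1 ≤ i) (h : k + i + 1 ≤ N) :
    q ^ i * qBinom q (k + i) k =
      qBinom q (k + i + 1) (k + 1) - qBinom q (k + i) (k + 1) := by
  obtain ⟨j, rfl⟩ : ∃ j, i = j + 1 := ⟨i - 1, by omega⟩
  have e1 : k + (j + 1) - k = j + 1 := by omega
  have e2 : k + (j + 1) + 1 - (k + 1) = j + 1 := by omega
  have e3 : k + (j + 1) - (k + 1) = j := by omega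
  rw [qBinom, qBinom, qBinom, e1, e2, e3]
  have hki : k + (j + 1) + 1 = (j + 1) + (k + 1) := by ring
  have hFtop : qFac q (k + (j + 1) + 1) = qFac q (k + (j + 1)) * qInt q (k + (j + 1) + 1) :=
    qFac_succ q _
  rw [hFtop, qFac_succ q j, qFac_succ q k]
  have hqi : qInt q (k + (j + 1) + 1) = qInt q (j + 1) + q ^ (j + 1) * qInt q (k + 1) := by
    rw [hki]; exact qInt_add q (j + 1) (k + 1)
  rw [hqi]
  have n1 : qFac q (k + (j + 1)) ≠ 0 := qFac_ne_zero hN hq (by omega)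
  have n2 : qFac q k ≠ 0 := qFac_ne_zero hN hq (by omega)
  have n3 : qFac q j ≠ 0 := qFac_ne_zero hN hq (by omega)
  have n4 : qInt q (j + 1) ≠ 0 := qInt_ne_zero hN hq (by omega) (by omega)
  have n5 : qInt q (k + 1) ≠ 0 := qInt_ne_zero hN hq (by omega) (by omega)
  field_simp
  ring

/-- The recursion `β_{s+1} = (1 - q^s) β_s` holds, hence `β_s = 0` for `1 ≤ s ≤ N-1`
since `β_1 = [N]_q = 0`. -/
theorem betaSum_recursion_and_vanishing (N : ℕ) (hN : N.Prime) (q : ℂ)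
    (hq : IsPrimitiveRoot q N) :
    (∀ s : ℕ, 1 ≤ s → s ≤ N - 2 → betaSum q N (s + 1) = (1 - q ^ s) * betaSum q N s) ∧
      (∀ s : ℕ, 1 ≤ s → s ≤ N - 1 → betaSum q N s = 0) := by
  have hN2 : 2 ≤ N := hN.two_le
  have hrec : ∀ s : ℕ, 1 ≤ s → s ≤ N - 2 →
      betaSum q N (s + 1) = (1 - q ^ s) * betaSum q N s := by
    intro s hs1 hs2
    obtain ⟨k, hk⟩ : ∃ k, N = k + s + 2 := ⟨N - s - 2, by omega⟩
    have h1 : N - 1 - (s + 1) = k := by omega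
    have h2 : N - 1 - s = k + 1 := by omega
    have hbs : betaSum q N s =
        ∑ i ∈ Finset.range (s + 1), q ^ (i * s) * qBinom q (k + 1 + i) (k + 1) := by
      rw [betaSum, h2]
    rw [betaSum, h1, Finset.sum_range_succ']
    have hstep : ∀ i ∈ Finset.range (s + 1),
        q ^ ((i + 1) * (s + 1)) * qBinom q (k + (i + 1)) k =
          q ^ ((i + 1) * s) * (qBinom q (k + (i + 1) + 1) (k + 1)
            - qBinom q (k + (i + 1)) (k + 1)) := by
      intro i hi
      have hi' : i < s + 1 := Finset.mem_range.1 hi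
      have := qBinom_pascal hN2 hq k (i + 1) (by omega) (by omega)
      calc q ^ ((i + 1) * (s + 1)) * qBinom q (k + (i + 1)) k
          = q ^ ((i + 1) * s) * (q ^ (i + 1) * qBinom q (k + (i + 1)) k) := by
            rw [← mul_assoc, ← pow_add]; ring_nf
        _ = q ^ ((i + 1) * s) * (qBinom q (k + (i + 1) + 1) (k + 1)
            - qBinom q (k + (i + 1)) (k + 1)) := by rw [this]
    rw [Finset.sum_congr rfl hstep]
    simp only [mul_sub]
    rw [Finset.sum_sub_distrib]
    -- First sum
    have hA : (∑ i ∈ Finset.range (s + 1),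
        q ^ ((i + 1) * s) * qBinom q (k + (i + 1) + 1) (k + 1)) = betaSum q N s - 1 := by
      have := Finset.sum_range_succ'
        (fun j => q ^ (j * s) * qBinom q (k + 1 + j) (k + 1)) (s + 1)
      have hsum2 : (∑ j ∈ Finset.range (s + 2), q ^ (j * s) * qBinom q (k + 1 + j) (k + 1))
          = betaSum q N s := by
        rw [Finset.sum_range_succ, hbs]
        have : k + 1 + (s + 1) = N := by omega
        rw [this, qBinom_N_zero hN2 hq, mul_zero, add_zero]
      have h0 : q ^ (0 * s) * qBinom q (k + 1 + 0) (k + 1) = 1 := by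
        simp [qBinom_self hN2 hq (show k + 1 < N by omega)]
      rw [hsum2] at this
      rw [h0] at this
      have hterm : ∀ i, q ^ ((i + 1) * s) * qBinom q (k + (i + 1) + 1) (k + 1)
          = q ^ ((i + 1) * s) * qBinom q (k + 1 + (i + 1)) (k + 1) := by
        intro i; congr 2; omega
      simp only [hterm]
      linear_combination -this
    have hB : (∑ i ∈ Finset.range (s + 1),
        q ^ ((i + 1) * s) * qBinom q (k + (i + 1)) (k + 1)) = q ^ s * betaSum q N s := by
      rw [hbs, Finset.mul_sum]
      refine Finset.sum_congr rfl fun i _ => ?_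
      have e : k + (i + 1) = k + 1 + i := by omega
      rw [e, ← mul_assoc, ← pow_add]
      ring_nf
    rw [hA, hB]
    have hself : qBinom q (k + 0) k = 1 := qBinom_self hN2 hq (by omega)
    rw [hself]
    ring
  refine ⟨hrec, ?_⟩
  have h1zero : betaSum q N 1 = 0 := by
    obtain ⟨m, hm⟩ : ∃ m, N = m + 2 := ⟨N - 2, by omega⟩
    have h2 : N - 1 - 1 = m := by omega
    rw [betaSum]
    rw [Finset.sum_range_succ, Finset.sum_range_succ, Finset.sum_range_zero, h2]
    have hm1 : qBinom q (m + 0) m = 1 := qBinom_self hN2 hq (by omega)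
    have hm2 : qBinom q (m + 1) m = qInt q (m + 1) := by
      rw [qBinom, Nat.add_sub_cancel_left, qFac_succ]
      have : qFac q 1 = 1 := by rw [qFac]; simp [qInt_one]
      rw [this, mul_one, mul_comm, mul_div_assoc,
        div_self (qFac_ne_zero hN2 hq (show m < N by omega)), mul_one]
    rw [hm1, hm2]
    have := qInt_add q 1 (m + 1)
    rw [qInt_one] at this
    have hNe : (1 : ℕ) + (m + 1) = N := by omega
    rw [hNe] at this
    rw [qInt_N_zero hN2 hq] at this
    simp only [zero_add, mul_one, pow_one, one_mul, pow_zero]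
    linear_combination -this
  intro s
  induction s with
  | zero => intro h _; omega
  | succ n ih =>
    intro _ hle
    rcases Nat.eq_zero_or_pos n with hn | hn
    · subst hn; exact h1zero
    · rw [hrec n hn (by omega), ih hn (by omega), mul_zero]
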